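/- arXiv:math/0608235 — 5 statements merged into one kernel-verified Lean document; each statement's English description precedes it below -/
import Mathlib

section
/- For variables x_1,…,x_m and y_1,…,y_n and any r ≥ 0, one has e_r(y_1,…,y_n) = ∑_{s=0}^{r} (-1)^s h_s(x_1,…,x_m) e_{r-s}(x_1,…,x_m,y_1,…,y_n). -/
open Finset

/-- The `r`-th elementary symmetric polynomial evaluated at the family `x`. -/
def esymF {R : Type*} [CommRing R] {σ : Type*} [Fintype σ] [DecidableEq σ]
    (x : σ → R) (r : ℕ) : R :=
  ∑ A ∈ Finset.powersetCard r (Finset.univ : Finset σ), ∏ i ∈ A, x i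

/-- The `r`-th complete homogeneous symmetric polynomial evaluated at the family `x`. -/
def hsymF {R : Type*} [CommRing R] {σ : Type*} [Fintype σ] [DecidableEq σ]
    (x : σ → R) (r : ℕ) : R :=
  ∑ m ∈ (Finset.univ : Finset σ).sym r, ((m : Multiset σ).map x).prod

namespace EsymmHsymmAux

open PowerSeries

variable {R : Type*} [CommRing R] {σ : Type*} [Fintype σ] [DecidableEq σ]

lemma geom (a : R) :
    (1 - (C a) * X) * PowerSeries.mk (fun n => a ^ n) = 1 := by
  ext n
  rw [sub_mul, one_mul, mul_assoc, map_sub, coeff_C_mul]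
  cases n with
  | zero => simp
  | succ n => simp [coeff_succ_X_mul, pow_succ, mul_comm]

lemma coeff_E (x : σ → R) (k : ℕ) :
    (coeff k) (∏ i : σ, (C (x i) * X + 1)) = esymF x k := by
  rw [esymF, Finset.prod_add]
  simp only [Finset.prod_const_one, mul_one]
  rw [map_sum]
  have h : ∀ A : Finset σ, (coeff k) (∏ i ∈ A, (C (x i) * X)) =
      if A.card = k then ∏ i ∈ A, x i else 0 := by
    intro A
    rw [Finset.prod_mul_distrib, ← map_prod, Finset.prod_const, coeff_C_mul, coeff_X_pow]
    split_ifs with h1 h2 h2 <;> simp_all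
  simp_rw [h]
  rw [← Finset.sum_filter, Finset.powersetCard_eq_filter]

lemma mk_hsymF (x : σ → R) :
    (PowerSeries.mk (hsymF x) : R⟦X⟧) = ∏ i : σ, PowerSeries.mk (fun n => (x i) ^ n) := by
  ext d
  rw [coeff_mk, coeff_prod, hsymF]
  simp only [coeff_mk]
  refine Finset.sum_nbij (fun m => Multiset.toFinsupp (m : Multiset σ)) ?_ ?_ ?_ ?_
  · intro a _
    simp only [Finset.mem_finsuppAntidiag]
    refine ⟨?_, Finset.subset_univ _⟩
    have : univ.sum ⇑(Multiset.toFinsupp (a : Multiset σ)) =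
        ∑ i, Multiset.count i (a : Multiset σ) := rfl
    rw [this, Multiset.sum_count_eq_card (fun a _ => Finset.mem_univ a), Sym.card_coe]
  · intro a _ b _ hab
    exact Sym.coe_injective (Multiset.toFinsupp.injective hab)
  · intro l hl
    simp only [Finset.mem_coe, Finset.mem_finsuppAntidiag] at hl
    refine ⟨⟨Finsupp.toMultiset l, ?_⟩, ?_, ?_⟩
    · rw [Finsupp.card_toMultiset]
      rw [← hl.1, Finsupp.sum_fintype _ _ (fun _ => rfl)]
      rfl
    · refine Finset.mem_coe.2 (Finset.mem_sym_iff.2 ?_)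
      intro a _
      exact Finset.mem_univ a
    · simp
  · intro a _
    rw [Finset.prod_multiset_map_count]
    refine (Finset.prod_subset (Finset.subset_univ _) ?_).trans ?_
    · intro i _ hi
      simp only [Multiset.mem_toFinset] at hi
      simp [Multiset.count_eq_zero_of_notMem hi]
    · refine Finset.prod_congr rfl fun i _ => ?_
      simp

lemma hsymF_neg (x : σ → R) (s : ℕ) :
    hsymF (fun i => -x i) s = (-1 : R) ^ s * hsymF x s := by
  rw [hsymF, hsymF, Finset.mul_sum]
  refine Finset.sum_congr rfl fun m _ => ?_
  have : (Multiset.map (fun i => -x i) (m : Multiset σ)) =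
      Multiset.map Neg.neg (Multiset.map x (m : Multiset σ)) := by
    rw [Multiset.map_map]; rfl
  rw [this, Multiset.prod_map_neg, Multiset.card_map, Sym.card_coe]

lemma mk_hsymF_neg_mul (x : σ → R) :
    (PowerSeries.mk (hsymF (fun i => -x i)) : R⟦X⟧) * ∏ i : σ, (C (x i) * X + 1) = 1 := by
  rw [mk_hsymF, ← Finset.prod_mul_distrib]
  rw [Finset.prod_eq_one]
  intro i _
  have h1 : (C (x i) * X + 1 : R⟦X⟧) = 1 - C (-x i) * X := by
    rw [map_neg]; ring
  rw [h1, mul_comm]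
  exact geom (-x i)

end EsymmHsymmAux

/-- `e_r(y_1,…,y_n) = ∑_{s=0}^{r} (-1)^s h_s(x_1,…,x_m) e_{r-s}(x_1,…,x_m,y_1,…,y_n)`. -/
theorem esymm_eq_alternating_sum_hsymm_esymm_union {R : Type*} [CommRing R] (m n : ℕ)
    (x : Fin m → R) (y : Fin n → R) (r : ℕ) :
    esymF y r =
      ∑ s ∈ Finset.range (r + 1),
        (-1 : R) ^ s * hsymF x s * esymF (Sum.elim x y) (r - s) := by
  open PowerSeries EsymmHsymmAux in
  have key : (PowerSeries.mk (hsymF (fun i => -x i)) : R⟦X⟧) *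
      ∏ i : Fin m ⊕ Fin n, (C (Sum.elim x y i) * X + 1) =
      ∏ j : Fin n, (C (y j) * X + 1) := by
    rw [Fintype.prod_sum_type]
    have hx : ∀ a : Fin m, (C (Sum.elim x y (Sum.inl a)) * X + 1 : R⟦X⟧)
        = C (x a) * X + 1 := fun a => rfl
    have hy : ∀ b : Fin n, (C (Sum.elim x y (Sum.inr b)) * X + 1 : R⟦X⟧)
        = C (y b) * X + 1 := fun b => rfl
    simp_rw [hx, hy]
    rw [← mul_assoc, mk_hsymF_neg_mul, one_mul]
  have := congrArg (PowerSeries.coeff r) key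
  rw [PowerSeries.coeff_mul, coeff_E] at this
  rw [← this, Finset.Nat.sum_antidiagonal_eq_sum_range_succ_mk]
  refine Finset.sum_congr rfl fun s _ => ?_
  rw [PowerSeries.coeff_mk, hsymF_neg, EsymmHsymmAux.coeff_E, mul_assoc]
end

section
/- Let x_1,…,x_n be elements of a commutative ring and u an element with (u - x_1)⋯(u - x_n) = 0. Then for every r ≥ 0, u^{n+r} = ∑_{s=1}^{n} ∑_{t=1}^{s} (-1)^{s-t} e_{s-t}(x_1,…,x_n) h_{r+t}(x_1,…,x_n) u^{n-s}. -/
set_option linter.unusedSectionVars false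
set_option maxHeartbeats 1000000

open Finset

namespace SymAux

variable {R : Type*} [CommRing R] {σ : Type*} [DecidableEq σ]

def esF (x : σ → R) (s : Finset σ) (k : ℕ) : R :=
  ∑ A ∈ Finset.powersetCard k s, ∏ i ∈ A, x i

def hsF (x : σ → R) (s : Finset σ) (k : ℕ) : R :=
  ∑ m ∈ s.sym k, ((m : Multiset σ).map x).prod

lemma esF_zero (x : σ → R) (s : Finset σ) : esF x s 0 = 1 := by simp [esF]

lemma esF_eq_zero (x : σ → R) {s : Finset σ} {k : ℕ} (h : s.card < k) : esF x s k = 0 := by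
  simp [esF, Finset.powersetCard_eq_empty.mpr h]

lemma hsF_zero (x : σ → R) (s : Finset σ) : hsF x s 0 = 1 := by
  simp only [hsF, Finset.sym_zero, Finset.sum_singleton]
  rfl

lemma hsF_empty (x : σ → R) {k : ℕ} (h : 0 < k) : hsF x (∅ : Finset σ) k = 0 := by
  obtain ⟨k, rfl⟩ := Nat.exists_eq_add_of_lt h
  simp [hsF]

lemma esF_insert (x : σ → R) {a : σ} {s : Finset σ} (ha : a ∉ s) (k : ℕ) :
    esF x (insert a s) (k + 1) = esF x s (k + 1) + x a * esF x s k := by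
  rw [esF, Finset.powersetCard_succ_insert ha, Finset.sum_union, Finset.sum_image]
  · rw [esF, esF, Finset.mul_sum]
    congr 1
    refine Finset.sum_congr rfl fun A hA => ?_
    rw [Finset.prod_insert fun h => ha ((Finset.mem_powersetCard.mp hA).1 h)]
  · intro A hA B hB hAB
    have hA' : a ∉ A := fun h => ha ((Finset.mem_powersetCard.mp hA).1 h)
    have hB' : a ∉ B := fun h => ha ((Finset.mem_powersetCard.mp hB).1 h)
    rw [← Finset.erase_insert hA', ← Finset.erase_insert hB', hAB]
  · rw [Finset.disjoint_right]
    rintro A hA hA'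
    obtain ⟨B, hB, rfl⟩ := Finset.mem_image.mp hA
    exact ha ((Finset.mem_powersetCard.mp hA').1 (Finset.mem_insert_self a B))

lemma hsF_insert (x : σ → R) {a : σ} {s : Finset σ} (ha : a ∉ s) (k : ℕ) :
    hsF x (insert a s) k = ∑ i ∈ range (k + 1), x a ^ i * hsF x s (k - i) := by
  rw [← Fin.sum_univ_eq_sum_range (fun i => x a ^ i * hsF x s (k - i)) (k + 1)]
  simp_rw [hsF, Finset.mul_sum, Finset.sum_sigma']
  refine Finset.sum_nbij' (fun m => ⟨(m.filterNe a).1, (m.filterNe a).2⟩)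
      (fun p => p.2.fill a p.1) ?_ ?_ ?_ ?_ ?_
  · intro m hm
    refine Finset.mem_sigma.mpr ⟨Finset.mem_univ _, ?_⟩
    have := Finset.sym_filterNe_mem a hm
    rwa [Finset.erase_insert ha] at this
  · intro p hp
    exact Finset.sym_fill_mem a (Finset.mem_sigma.mp hp).2
  · intro m _
    exact Sym.fill_filterNe a m
  · intro p hp
    refine Sym.filter_ne_fill a p fun h => ha ?_
    exact Finset.mem_sym_iff.mp (Finset.mem_sigma.mp hp).2 a h
  · intro m _
    conv_lhs => rw [← Sym.fill_filterNe a m]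
    rw [Sym.coe_fill, Multiset.map_add, Multiset.prod_add, Sym.coe_replicate, Multiset.map_replicate,
      Multiset.prod_replicate, mul_comm]


lemma hsF_insert' (x : σ → R) {a : σ} {s : Finset σ} (ha : a ∉ s) (k : ℕ) :
    hsF x (insert a s) (k + 1) = hsF x s (k + 1) + x a * hsF x (insert a s) k := by
  rw [hsF_insert x ha (k + 1), hsF_insert x ha k, Finset.sum_range_succ' _ (k + 1)]
  simp only [pow_zero, one_mul, Nat.sub_zero, pow_succ, Nat.succ_sub_succ]
  rw [add_comm, Finset.mul_sum]
  congr 1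
  exact Finset.sum_congr rfl fun i _ => by ring

lemma EH (x : σ → R) (m : ℕ) (hm : 0 < m) (s : Finset σ) :
    ∑ j ∈ range (m + 1), (-1 : R) ^ j * esF x s j * hsF x s (m - j) = 0 := by
  induction s using Finset.induction_on with
  | empty =>
    refine Finset.sum_eq_zero fun j hj => ?_
    rcases Nat.eq_zero_or_pos j with rfl | hj0
    · rw [Nat.sub_zero, hsF_empty x hm]; ring
    · rw [esF_eq_zero x (by simpa using hj0)]; ring
  | @insert a t ha ih =>
    have claim1 : ∑ j ∈ range (m + 1),
          (-1 : R) ^ j * esF x (insert a t) j * hsF x (insert a t) (m - j)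
        = ∑ j ∈ range (m + 1), (-1 : R) ^ j * esF x t j * hsF x (insert a t) (m - j)
          - x a * ∑ j ∈ range m, (-1 : R) ^ j * esF x t j * hsF x (insert a t) (m - 1 - j) := by
      rw [Finset.sum_range_succ' _ m, Finset.sum_range_succ'
        (fun j => (-1 : R) ^ j * esF x t j * hsF x (insert a t) (m - j)) m]
      simp only [pow_zero, one_mul, Nat.sub_zero, esF_zero]
      have key : ∀ j ∈ range m,
          (-1 : R) ^ (j + 1) * esF x (insert a t) (j + 1) * hsF x (insert a t) (m - (j + 1))
          = (-1 : R) ^ (j + 1) * esF x t (j + 1) * hsF x (insert a t) (m - (j + 1))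
            - x a * ((-1 : R) ^ j * esF x t j * hsF x (insert a t) (m - 1 - j)) := by
        intro j hj
        have e1 : m - (j + 1) = m - 1 - j := by omega
        rw [esF_insert x ha, e1]
        ring
      rw [Finset.sum_congr rfl key, Finset.sum_sub_distrib, Finset.mul_sum]
      ring
    have claim2 : ∑ j ∈ range (m + 1), (-1 : R) ^ j * esF x t j * hsF x (insert a t) (m - j)
        = (∑ j ∈ range (m + 1), (-1 : R) ^ j * esF x t j * hsF x t (m - j))
          + x a * ∑ j ∈ range m, (-1 : R) ^ j * esF x t j * hsF x (insert a t) (m - 1 - j) := by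
      rw [Finset.sum_range_succ, Finset.sum_range_succ
        (fun j => (-1 : R) ^ j * esF x t j * hsF x t (m - j)), Nat.sub_self, hsF_zero, hsF_zero]
      have key : ∀ j ∈ range m,
          (-1 : R) ^ j * esF x t j * hsF x (insert a t) (m - j)
          = (-1 : R) ^ j * esF x t j * hsF x t (m - j)
            + x a * ((-1 : R) ^ j * esF x t j * hsF x (insert a t) (m - 1 - j)) := by
        intro j hj
        have e1 : m - j = (m - 1 - j) + 1 := by
          simp only [Finset.mem_range] at hj; omega
        rw [e1, hsF_insert' x ha, ← e1]
        ring
      rw [Finset.sum_congr rfl key, Finset.sum_add_distrib, Finset.mul_sum]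
      ring
    rw [claim1, claim2, ih]
    ring


section FinStuff

variable {R : Type*} [CommRing R] {n : ℕ}

lemma EHn (x : Fin n → R) (m : ℕ) (hm : 0 < m) :
    ∑ j ∈ range (m + 1), (-1 : R) ^ j * esymF x j * hsymF x (m - j) = 0 :=
  EH x m hm (Finset.univ : Finset (Fin n))

lemma esymF_eq_zero (x : Fin n → R) {j : ℕ} (h : n < j) : esymF x j = 0 :=
  esF_eq_zero x (by simpa using h)


lemma vieta (x : Fin n → R) (u : R) (hu : ∏ i, (u - x i) = 0) :
    ∑ j ∈ range (n + 1), (-1 : R) ^ j * esymF x j * u ^ (n - j) = 0 := by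
  classical
  set s : Multiset R := Finset.univ.val.map fun i : Fin n => -x i with hs
  have hcard : Multiset.card s = n := by simp [hs]
  have hP := Multiset.prod_X_add_C_eq_sum_esymm s
  rw [hcard] at hP
  have hesymm : ∀ j, s.esymm j = (-1 : R) ^ j * esymF x j := by
    intro j
    have h1 : s = Multiset.map Neg.neg (Finset.univ.val.map x) := by
      rw [hs, Multiset.map_map]; rfl
    rw [h1, Multiset.esymm_neg, Finset.esymm_map_val]
    rfl
  have heval := congrArg (Polynomial.eval u) hP
  rw [Polynomial.eval_multiset_prod, Multiset.map_map] at heval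
  have hL : (Multiset.map ((Polynomial.eval u) ∘ fun r => Polynomial.X + Polynomial.C r) s).prod
      = ∏ i, (u - x i) := by
    rw [hs, Multiset.map_map, Finset.prod_eq_multiset_prod]
    congr 1
    apply Multiset.map_congr rfl
    intro i _
    simp [sub_eq_add_neg]
  rw [hL, hu] at heval
  rw [Polynomial.eval_finset_sum] at heval
  simp only [Polynomial.eval_mul, Polynomial.eval_C, Polynomial.eval_pow, Polynomial.eval_X,
    hesymm] at heval
  exact heval.symm


/-- inner coefficient -/
def cc (x : Fin n → R) (s r : ℕ) : R :=
  ∑ j ∈ range s, (-1 : R) ^ j * esymF x j * hsymF x (r + s - j)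

lemma cc_zero (x : Fin n → R) (r : ℕ) : cc x 0 r = 0 := by simp [cc]

lemma esymF_zero (x : Fin n → R) : esymF x 0 = 1 := by simp [esymF]

lemma hsymF_zero (x : Fin n → R) : hsymF x 0 = 1 := by
  simp only [hsymF, Finset.sym_zero, Finset.sum_singleton]; rfl

lemma cc_zero_r (x : Fin n → R) (s : ℕ) (hs : 0 < s) :
    cc x s 0 = (-1 : R) ^ (s + 1) * esymF x s := by
  have h := EHn x s hs
  rw [Finset.sum_range_succ, Nat.sub_self, hsymF_zero] at h
  have h2 : cc x s 0 = ∑ j ∈ range s, (-1 : R) ^ j * esymF x j * hsymF x (s - j) := by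
    unfold cc
    exact Finset.sum_congr rfl fun j _ => by rw [Nat.zero_add]
  rw [h2]
  have := h
  linear_combination h + ((-1 : R) ^ s * esymF x s) * (by ring : ((-1:R))^1 = -1)

lemma cc_succ (x : Fin n → R) (s r : ℕ) :
    cc x (s + 1) r = cc x s (r + 1) + (-1 : R) ^ s * esymF x s * hsymF x (r + 1) := by
  unfold cc
  rw [Finset.sum_range_succ]
  congr 1
  · refine Finset.sum_congr rfl fun j hj => ?_
    have : r + (s + 1) - j = r + 1 + s - j := by omega
    rw [this]
  · have : r + (s + 1) - s = r + 1 := by omega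
    rw [this]

lemma cc_top (x : Fin n → R) (r : ℕ) :
    cc x n (r + 1) = (-1 : R) ^ (n + 1) * esymF x n * hsymF x (r + 1) := by
  have h := EHn x (n + (r + 1)) (by omega)
  have hsub : ∑ j ∈ range (n + (r + 1) + 1), (-1 : R) ^ j * esymF x j *
      hsymF x (n + (r + 1) - j) = ∑ j ∈ range (n + 1), (-1 : R) ^ j * esymF x j *
      hsymF x (n + (r + 1) - j) := by
    symm
    apply Finset.sum_subset
    · intro j hj; simp only [Finset.mem_range] at *; omega
    · intro j _ hj
      simp only [Finset.mem_range, not_lt] at hj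
      rw [esymF_eq_zero x (by omega)]
      ring
  rw [hsub, Finset.sum_range_succ] at h
  have e1 : n + (r + 1) - n = r + 1 := by omega
  rw [e1] at h
  have h2 : cc x n (r + 1) = ∑ j ∈ range n, (-1 : R) ^ j * esymF x j *
      hsymF x (n + (r + 1) - j) := by
    unfold cc
    exact Finset.sum_congr rfl fun j hj => by
      have : r + 1 + n - j = n + (r + 1) - j := by omega
      rw [this]
  rw [h2]
  linear_combination h + ((-1 : R) ^ n * esymF x n * hsymF x (r + 1)) * (by ring : ((-1:R))^1 = -1)

theorem main (x : Fin n → R) (u : R) (hu : ∏ i, (u - x i) = 0) (r : ℕ) :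
    u ^ (n + r) = ∑ s ∈ Finset.Icc 1 n, cc x s r * u ^ (n - s) := by
  induction r with
  | zero =>
    have base : u ^ n = ∑ s ∈ Finset.Icc 1 n, (-1 : R) ^ (s + 1) * esymF x s * u ^ (n - s) := by
      have h := vieta x u hu
      rw [Finset.sum_range_eq_add_Ico _ (Nat.succ_pos n), Nat.succ_eq_add_one, Finset.Ico_add_one_right_eq_Icc] at h
      simp only [pow_zero, one_mul, Nat.sub_zero, esymF_zero] at h
      have : ∑ s ∈ Finset.Icc 1 n, (-1 : R) ^ (s + 1) * esymF x s * u ^ (n - s)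
          = -∑ s ∈ Finset.Icc 1 n, (-1 : R) ^ s * esymF x s * u ^ (n - s) := by
        rw [← Finset.sum_neg_distrib]
        exact Finset.sum_congr rfl fun s _ => by ring
      rw [this]
      linear_combination h
    rw [Nat.add_zero, base]
    refine Finset.sum_congr rfl fun s hs => ?_
    rw [cc_zero_r x s (by simp only [Finset.mem_Icc] at hs; omega)]
  | succ r ih =>
    have key : u ^ (n + (r + 1)) = ∑ i ∈ range n, cc x (1 + i) r * u ^ (n - (1 + i)) * u := by
      have e0 : n + (r + 1) = (n + r) + 1 := rfl
      rw [e0, pow_succ, ih, Finset.sum_mul, ← Finset.Ico_add_one_right_eq_Icc, Finset.sum_Ico_eq_sum_range]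
      simp only [Nat.succ_sub_one, Nat.add_sub_cancel]
    have key2 : ∀ i ∈ range n, cc x (1 + i) r * u ^ (n - (1 + i)) * u
        = cc x i (r + 1) * u ^ (n - i)
          + ((-1 : R) ^ i * esymF x i * u ^ (n - i)) * hsymF x (r + 1) := by
      intro i hi
      simp only [Finset.mem_range] at hi
      have h1 : (1 : ℕ) + i = i + 1 := by omega
      have h2 : u ^ (n - (1 + i)) * u = u ^ (n - i) := by
        rw [← pow_succ]
        congr 1
        omega
      have h2' : u ^ (n - (i + 1)) * u = u ^ (n - i) := by
        rw [← pow_succ]; congr 1; omega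
      rw [h1, cc_succ, mul_assoc, h2']
      ring
    have hv : ∑ j ∈ range n, (-1 : R) ^ j * esymF x j * u ^ (n - j)
        = -((-1 : R) ^ n * esymF x n) := by
      have v := vieta x u hu
      rw [Finset.sum_range_succ, Nat.sub_self, pow_zero, mul_one] at v
      linear_combination v
    have hsplit : ∑ i ∈ range (n + 1), cc x i (r + 1) * u ^ (n - i)
        = ∑ i ∈ range n, cc x i (r + 1) * u ^ (n - i) + cc x n (r + 1) := by
      rw [Finset.sum_range_succ, Nat.sub_self, pow_zero, mul_one]
    have hsplit' : ∑ i ∈ range (n + 1), cc x i (r + 1) * u ^ (n - i)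
        = ∑ i ∈ range n, cc x (i + 1) (r + 1) * u ^ (n - (i + 1)) := by
      rw [Finset.sum_range_succ' (fun i => cc x i (r + 1) * u ^ (n - i)) n, cc_zero]
      simp
    have htarget : ∑ s ∈ Finset.Icc 1 n, cc x s (r + 1) * u ^ (n - s)
        = ∑ i ∈ range n, cc x (1 + i) (r + 1) * u ^ (n - (1 + i)) := by
      rw [← Finset.Ico_add_one_right_eq_Icc, Finset.sum_Ico_eq_sum_range]
      simp only [Nat.succ_sub_one, Nat.add_sub_cancel]
    rw [key, Finset.sum_congr rfl key2, Finset.sum_add_distrib, ← Finset.sum_mul, hv, htarget]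
    have hre : ∑ i ∈ range n, cc x (1 + i) (r + 1) * u ^ (n - (1 + i))
        = ∑ i ∈ range n, cc x (i + 1) (r + 1) * u ^ (n - (i + 1)) := by
      exact Finset.sum_congr rfl fun i _ => by rw [Nat.add_comm 1 i]
    rw [hre, ← hsplit', hsplit, cc_top]
    ring


lemma inner_eq (x : Fin n → R) (r s : ℕ) :
    ∑ t ∈ Finset.Icc 1 s, (-1 : R) ^ (s - t) * esymF x (s - t) * hsymF x (r + t)
      = cc x s r := by
  rw [← Finset.Ico_add_one_right_eq_Icc, Finset.sum_Ico_eq_sum_range]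
  simp only [Nat.succ_sub_one, Nat.add_sub_cancel]
  rw [cc]
  conv_rhs => rw [← Finset.sum_range_reflect]
  refine Finset.sum_congr rfl fun i hi => ?_
  simp only [Finset.mem_range] at hi
  have e1 : s - (1 + i) = s - 1 - i := by omega
  have e2 : r + (1 + i) = r + s - (s - 1 - i) := by omega
  rw [e1, e2]

end FinStuff

end SymAux

/-- If `(u-x_1)⋯(u-x_n) = 0`, then for every `r ≥ 0`,
`u^{n+r} = ∑_{s=1}^{n} ∑_{t=1}^{s} (-1)^{s-t} e_{s-t} h_{r+t} u^{n-s}`. -/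
theorem pow_eq_sum_esymm_hsymm' {R : Type*} [CommRing R] (n : ℕ) (x : Fin n → R)
    (u : R) (hu : ∏ i, (u - x i) = 0) (r : ℕ) :
    u ^ (n + r) =
      ∑ s ∈ Finset.Icc 1 n, ∑ t ∈ Finset.Icc 1 s,
        (-1 : R) ^ (s - t) * esymF x (s - t) * hsymF x (r + t) * u ^ (n - s) := by
  rw [SymAux.main x u hu r]
  refine Finset.sum_congr rfl fun s hs => ?_
  rw [← Finset.sum_mul, SymAux.inner_eq x r s]
end

section
/- Let μ and ν be compositions of n and λ the transpose (conjugate) of the partition obtained by sorting μ. Let I^μ_ν be the ideal of P_ν = ℂ[x_1,…,x_n]^{S_ν} generated by the elements h_r(ν; i_1,…,i_m) for all m ≥ 1, distinct integers i_1,…,i_m, and r > λ_1 + ⋯ + λ_m − ν_{i_1} − ⋯ − ν_{i_m}. Then I^μ_ν is also generated by the elements e_r(ν; i_1,…,i_m) for all m ≥ 1, distinct integers i_1,…,i_m, and r > ν_{i_1} + ⋯ + ν_{i_m} − λ_{l+1} − λ_{l+2} − ⋯, where l is the number of indices i with ν_i > 0 and i ∉ {i_1,…,i_m}. -/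
open Finset MvPolynomial

/-- The Young (parabolic) subgroup `S_ν` of `S_n` attached to the block-assignment
function `c : Fin n → ℤ` (so `ν_i = #{j | c j = i}`). -/
def youngSubgroup (n : ℕ) (c : Fin n → ℤ) : Subgroup (Equiv.Perm (Fin n)) where
  carrier := {σ | ∀ j, c (σ j) = c j}
  one_mem' := fun _ => rfl
  mul_mem' := by
    intro σ τ hσ hτ j
    have h1 := hσ (τ j)
    have h2 := hτ j
    simpa [Equiv.Perm.mul_apply, h2] using h1
  inv_mem' := by
    intro σ hσ j
    have := hσ (σ⁻¹ j)
    simpa using this.symm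

/-- The subalgebra of `W`-invariant polynomials `P_ν = ℂ[x_1,…,x_n]^{S_ν}`. -/
noncomputable def invariantSubalgebra (n : ℕ) (W : Subgroup (Equiv.Perm (Fin n))) :
    Subalgebra ℂ (MvPolynomial (Fin n) ℂ) where
  carrier := {f | ∀ σ ∈ W, rename (⇑σ) f = f}
  mul_mem' := by
    intro a b ha hb σ hσ
    rw [map_mul, ha σ hσ, hb σ hσ]
  add_mem' := by
    intro a b ha hb σ hσ
    rw [map_add, ha σ hσ, hb σ hσ]
  algebraMap_mem' := by
    intro r σ hσ
    exact (rename (⇑σ)).commutes r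

/-- `ν_i`: the size of the `i`-th block. -/
def nuPart (n : ℕ) (c : Fin n → ℤ) (i : ℤ) : ℕ :=
  (Finset.univ.filter (fun j => c j = i)).card

/-- `h_r(ν; i_1,…,i_m)`: the `r`-th complete homogeneous symmetric polynomial in the
variables lying in the blocks indexed by the finset `S`. -/
noncomputable def hIn (n : ℕ) (c : Fin n → ℤ) (S : Finset ℤ) (r : ℕ) :
    MvPolynomial (Fin n) ℂ :=
  ∑ m ∈ (Finset.univ.filter (fun j => c j ∈ S)).sym r,
    ((m : Multiset (Fin n)).map X).prod

/-- `e_r(ν; i_1,…,i_m)`: the `r`-th elementary symmetric polynomial in the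
variables lying in the blocks indexed by the finset `S`. -/
noncomputable def eIn (n : ℕ) (c : Fin n → ℤ) (S : Finset ℤ) (r : ℕ) :
    MvPolynomial (Fin n) ℂ :=
  ∑ T ∈ Finset.powersetCard r (Finset.univ.filter (fun j => c j ∈ S)), ∏ j ∈ T, X j

/-- `λ_j` (here `lamPart μ 0 = λ_1`, etc.): the transpose partition of `μ`,
`λ_j = #{i | μ_i ≥ j}`. -/
def lamPart (μ : ℤ →₀ ℕ) (j : ℕ) : ℕ :=
  (μ.support.filter (fun i => j + 1 ≤ μ i)).card

/-! ### Auxiliary development -/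

section SymmetricPolys

variable {n : ℕ}

noncomputable def hp (A : Finset (Fin n)) (r : ℕ) : MvPolynomial (Fin n) ℂ :=
  ∑ m ∈ A.sym r, ((m : Multiset (Fin n)).map X).prod

noncomputable def ep (A : Finset (Fin n)) (r : ℕ) : MvPolynomial (Fin n) ℂ :=
  ∑ T ∈ Finset.powersetCard r A, ∏ j ∈ T, X j

lemma hp_zero (A : Finset (Fin n)) : hp A 0 = 1 := by
  rw [hp, Finset.sym_zero, Finset.sum_singleton]
  rfl

lemma ep_zero (A : Finset (Fin n)) : ep A 0 = 1 := by
  simp [ep]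

lemma hp_empty (r : ℕ) (hr : r ≠ 0) : hp (∅ : Finset (Fin n)) r = 0 := by
  cases r with
  | zero => exact absurd rfl hr
  | succ k => simp [hp, Finset.sym_succ]

lemma ep_empty (r : ℕ) (hr : r ≠ 0) : ep (∅ : Finset (Fin n)) r = 0 := by
  cases r with
  | zero => exact absurd rfl hr
  | succ k =>
    rw [ep, Finset.powersetCard_eq_empty.2 (by simp)]
    simp

lemma ep_insert {a : Fin n} {A : Finset (Fin n)} (h : a ∉ A) (r : ℕ) :
    ep (insert a A) (r + 1) = ep A (r + 1) + X a * ep A r := by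
  rw [ep, Finset.powersetCard_succ_insert h, Finset.sum_union, Finset.sum_image]
  · rw [ep, ep, Finset.mul_sum]
    congr 1
    apply Finset.sum_congr rfl
    intro T hT
    rw [Finset.prod_insert (fun haT => h ((Finset.mem_powersetCard.1 hT).1 haT))]
  · intro T hT T' hT' hE
    have hT1 := (Finset.mem_powersetCard.1 hT).1
    have hT2 := (Finset.mem_powersetCard.1 hT').1
    have : ∀ U : Finset (Fin n), U ⊆ A → (insert a U).erase a = U := by
      intro U hU
      rw [Finset.erase_insert (fun haU => h (hU haU))]
    rw [← this T hT1, ← this T' hT2, hE]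
  · rw [Finset.disjoint_left]
    intro T hT hT2
    obtain ⟨U, hU, rfl⟩ := Finset.mem_image.1 hT2
    exact (fun haT => h ((Finset.mem_powersetCard.1 hT).1 haT)) (Finset.mem_insert_self a U)

lemma hp_insert {a : Fin n} {A : Finset (Fin n)} (h : a ∉ A) (r : ℕ) :
    hp (insert a A) r = ∑ i ∈ Finset.range (r + 1), (X a) ^ i * hp A (r - i) := by
  rw [hp, ← Finset.sum_coe_sort]
  refine ((Equiv.sum_comp (Finset.symInsertEquiv (n := r) h).symm fun m =>
    (((m : Sym (Fin n) r) : Multiset (Fin n)).map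
      (X : Fin n → MvPolynomial (Fin n) ℂ)).prod).symm).trans ?_
  rw [← Finset.univ_sigma_univ, Finset.sum_sigma,
    ← Fin.sum_univ_eq_sum_range (fun i => (X a : MvPolynomial (Fin n) ℂ) ^ i * hp A (r - i))]
  apply Finset.sum_congr rfl
  intro i _
  rw [hp, Finset.mul_sum, ← Finset.sum_coe_sort (A.sym (r - ↑i))]
  apply Finset.sum_congr rfl
  intro m _
  simp only [Finset.symInsertEquiv_symm_apply_coe]
  rw [Sym.coe_fill]
  rw [Multiset.map_add, Multiset.prod_add]
  rw [mul_comm]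
  congr 1
  rw [Sym.coe_replicate, Multiset.map_replicate, Multiset.prod_replicate]

noncomputable def HSps (A : Finset (Fin n)) : PowerSeries (MvPolynomial (Fin n) ℂ) :=
  PowerSeries.mk (hp A)

noncomputable def ENps (A : Finset (Fin n)) : PowerSeries (MvPolynomial (Fin n) ℂ) :=
  PowerSeries.mk (fun r => (-1) ^ r * ep A r)

noncomputable def Geom (a : Fin n) : PowerSeries (MvPolynomial (Fin n) ℂ) :=
  PowerSeries.mk (fun i => (X a) ^ i)

lemma geom_mul (a : Fin n) :
    (1 - PowerSeries.C (X a) * PowerSeries.X) * Geom a = 1 := by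
  ext r
  rw [sub_mul, one_mul, mul_assoc, map_sub, PowerSeries.coeff_C_mul]
  cases r with
  | zero =>
    rw [PowerSeries.coeff_zero_X_mul]
    simp [Geom]
  | succ k =>
    rw [PowerSeries.coeff_succ_X_mul]
    simp [Geom, pow_succ, PowerSeries.coeff_one, mul_comm]

lemma HSps_empty : HSps (∅ : Finset (Fin n)) = 1 := by
  ext r
  cases r with
  | zero => simp [HSps, hp_zero, PowerSeries.coeff_one]
  | succ k => simp [HSps, hp_empty (k+1) (Nat.succ_ne_zero k), PowerSeries.coeff_one]

lemma ENps_empty : ENps (∅ : Finset (Fin n)) = 1 := by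
  ext r
  cases r with
  | zero => simp [ENps, ep_zero, PowerSeries.coeff_one]
  | succ k => simp [ENps, ep_empty (k+1) (Nat.succ_ne_zero k), PowerSeries.coeff_one]

lemma HSps_insert {a : Fin n} {A : Finset (Fin n)} (h : a ∉ A) :
    HSps (insert a A) = Geom a * HSps A := by
  ext r
  rw [PowerSeries.coeff_mul]
  simp only [HSps, Geom, PowerSeries.coeff_mk]
  rw [hp_insert h r, Finset.Nat.sum_antidiagonal_eq_sum_range_succ_mk]

lemma ENps_insert {a : Fin n} {A : Finset (Fin n)} (h : a ∉ A) :
    ENps (insert a A) = (1 - PowerSeries.C (X a) * PowerSeries.X) * ENps A := by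
  ext r
  rw [sub_mul, one_mul, mul_assoc, map_sub, PowerSeries.coeff_C_mul]
  cases r with
  | zero =>
    rw [PowerSeries.coeff_zero_X_mul]
    simp [ENps, ep_zero]
  | succ k =>
    rw [PowerSeries.coeff_succ_X_mul]
    simp only [ENps, PowerSeries.coeff_mk]
    rw [ep_insert h k]
    ring

lemma ENps_mul_HSps (A : Finset (Fin n)) : ENps A * HSps A = 1 := by
  induction A using Finset.induction_on with
  | empty => rw [ENps_empty, HSps_empty, one_mul]
  | @insert a A ha ih =>
    rw [ENps_insert ha, HSps_insert ha]
    calc (1 - PowerSeries.C (X a) * PowerSeries.X) * ENps A * (Geom a * HSps A)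
        = ((1 - PowerSeries.C (X a) * PowerSeries.X) * Geom a) * (ENps A * HSps A) := by
          ring
      _ = 1 := by rw [geom_mul, ih, one_mul]

lemma HSps_union {A B : Finset (Fin n)} (h : Disjoint A B) :
    HSps (A ∪ B) = HSps A * HSps B := by
  induction B using Finset.induction_on with
  | empty => rw [Finset.union_empty, HSps_empty, mul_one]
  | @insert a B hx ih =>
    have hd : Disjoint A B := h.mono_right (Finset.subset_insert a B)
    have ha : a ∉ A ∪ B := by
      simp only [Finset.mem_union, not_or]
      exact ⟨fun hA => (Finset.disjoint_left.1 h) hA (Finset.mem_insert_self a B), hx⟩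
    rw [Finset.union_insert, HSps_insert ha, HSps_insert hx, ih hd]
    ring

lemma HSps_eq_ENps_compl {A A' : Finset (Fin n)} (h : Disjoint A A')
    (hu : A ∪ A' = Finset.univ) :
    HSps A = ENps A' * HSps (Finset.univ : Finset (Fin n)) := by
  rw [← hu, HSps_union h]
  calc HSps A = (ENps A' * HSps A') * HSps A := by rw [ENps_mul_HSps, one_mul]
    _ = ENps A' * (HSps A * HSps A') := by ring

lemma hp_eq_sum_ep_hp {A A' : Finset (Fin n)} (h : Disjoint A A')
    (hu : A ∪ A' = Finset.univ) (r : ℕ) :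
    hp A r = ∑ p ∈ Finset.HasAntidiagonal.antidiagonal r,
      ((-1) ^ p.1 * ep A' p.1) * hp (Finset.univ : Finset (Fin n)) p.2 := by
  have := congrArg (PowerSeries.coeff r) (HSps_eq_ENps_compl h hu)
  rw [PowerSeries.coeff_mul] at this
  simp only [HSps, ENps, PowerSeries.coeff_mk] at this
  exact this

lemma newton_sum (r : ℕ) (hr : r ≠ 0) :
    ∑ p ∈ Finset.HasAntidiagonal.antidiagonal r,
      ((-1) ^ p.1 * ep (Finset.univ : Finset (Fin n)) p.1) *
        hp (Finset.univ : Finset (Fin n)) p.2 = 0 := by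
  have := congrArg (PowerSeries.coeff r) (ENps_mul_HSps (Finset.univ : Finset (Fin n)))
  rw [PowerSeries.coeff_mul, PowerSeries.coeff_one, if_neg hr] at this
  simp only [HSps, ENps, PowerSeries.coeff_mk] at this
  exact this

lemma hp_rename (σ : Equiv.Perm (Fin n)) (A : Finset (Fin n))
    (hA : ∀ j, σ j ∈ A ↔ j ∈ A) (r : ℕ) : rename σ (hp A r) = hp A r := by
  rw [hp, map_sum]
  refine Finset.sum_nbij' (fun m => Sym.map ⇑σ m) (fun m => Sym.map ⇑σ.symm m) ?_ ?_ ?_ ?_ ?_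
  · intro m hm
    rw [Finset.mem_sym_iff] at hm ⊢
    intro a ha
    obtain ⟨b, hb, rfl⟩ := Sym.mem_map.1 ha
    exact (hA b).2 (hm b hb)
  · intro m hm
    rw [Finset.mem_sym_iff] at hm ⊢
    intro a ha
    obtain ⟨b, hb, rfl⟩ := Sym.mem_map.1 ha
    exact (hA _).1 (by simpa using hm b hb)
  · intro m _
    rw [Sym.map_map]
    have : (⇑σ.symm ∘ ⇑σ) = fun x => x := funext fun x => σ.symm_apply_apply x
    rw [this, Sym.map_id']
  · intro m _
    rw [Sym.map_map]
    have : (⇑σ ∘ ⇑σ.symm) = fun x => x := funext fun x => σ.apply_symm_apply x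
    rw [this, Sym.map_id']
  · intro m _
    rw [map_multiset_prod, Multiset.map_map, Sym.coe_map, Multiset.map_map]
    simp only [Function.comp, rename_X]

lemma ep_rename (σ : Equiv.Perm (Fin n)) (A : Finset (Fin n))
    (hA : ∀ j, σ j ∈ A ↔ j ∈ A) (r : ℕ) : rename σ (ep A r) = ep A r := by
  rw [ep, map_sum]
  refine Finset.sum_nbij' (fun T => T.image ⇑σ) (fun T => T.image ⇑σ.symm) ?_ ?_ ?_ ?_ ?_
  · intro T hT
    rw [Finset.mem_powersetCard] at hT ⊢
    refine ⟨?_, by rw [Finset.card_image_of_injective _ σ.injective, hT.2]⟩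
    intro a ha
    obtain ⟨b, hb, rfl⟩ := Finset.mem_image.1 ha
    exact (hA b).2 (hT.1 hb)
  · intro T hT
    rw [Finset.mem_powersetCard] at hT ⊢
    refine ⟨?_, by rw [Finset.card_image_of_injective _ σ.symm.injective, hT.2]⟩
    intro a ha
    obtain ⟨b, hb, rfl⟩ := Finset.mem_image.1 ha
    exact (hA _).1 (by simpa using hT.1 hb)
  · intro T _
    rw [Finset.image_image]
    have : (⇑σ.symm ∘ ⇑σ) = id := funext fun x => σ.symm_apply_apply x
    rw [this, Finset.image_id]
  · intro T _
    rw [Finset.image_image]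
    have : (⇑σ ∘ ⇑σ.symm) = id := funext fun x => σ.apply_symm_apply x
    rw [this, Finset.image_id]
  · intro T _
    rw [map_prod, Finset.prod_image (fun a _ b _ h => σ.injective h)]
    simp only [rename_X]

end SymmetricPolys

section Numeric

variable {n : ℕ} {μ : ℤ →₀ ℕ} (hμ : μ.sum (fun _ m => m) = n)
include hμ

lemma part_le (i : ℤ) : μ i ≤ n := by
  by_cases h : i ∈ μ.support
  · calc μ i ≤ ∑ k ∈ μ.support, μ k := Finset.single_le_sum (fun _ _ => Nat.zero_le _) h
      _ = n := hμ
  · simp [Finsupp.notMem_support_iff.1 h]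

lemma lamPart_eq_zero {j : ℕ} (hj : n ≤ j) : lamPart μ j = 0 := by
  rw [lamPart, Finset.card_eq_zero, Finset.filter_eq_empty_iff]
  intro i _
  have := part_le hμ i
  omega

lemma Lam_n : ∑ j ∈ Finset.range n, lamPart μ j = n := by
  have key : ∀ j, lamPart μ j = ∑ i ∈ μ.support, (if j + 1 ≤ μ i then 1 else 0) := by
    intro j
    rw [lamPart, Finset.card_eq_sum_ones, Finset.sum_filter]
  calc ∑ j ∈ Finset.range n, lamPart μ j
      = ∑ j ∈ Finset.range n, ∑ i ∈ μ.support, (if j + 1 ≤ μ i then 1 else 0) := by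
        exact Finset.sum_congr rfl fun j _ => key j
    _ = ∑ i ∈ μ.support, ∑ j ∈ Finset.range n, (if j + 1 ≤ μ i then 1 else 0) :=
        Finset.sum_comm
    _ = ∑ i ∈ μ.support, μ i := by
        refine Finset.sum_congr rfl fun i _ => ?_
        have : Finset.filter (fun j => j + 1 ≤ μ i) (Finset.range n) = Finset.range (μ i) := by
          ext j
          simp only [Finset.mem_filter, Finset.mem_range]
          have := part_le hμ i
          omega
        rw [← Finset.sum_filter, this]
        simp
    _ = n := hμ

lemma Lam_split {l : ℕ} (hl : l ≤ n) :
    ∑ j ∈ Finset.range l, lamPart μ j + ∑ j ∈ Finset.Ico l n, lamPart μ j = n := by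
  rw [Finset.range_eq_Ico, Finset.sum_Ico_consecutive _ (Nat.zero_le l) hl,
    ← Finset.range_eq_Ico, Lam_n hμ]

lemma Lam_le (k : ℕ) : ∑ j ∈ Finset.range k, lamPart μ j ≤ n := by
  rcases le_total k n with h | h
  · calc ∑ j ∈ Finset.range k, lamPart μ j ≤ ∑ j ∈ Finset.range n, lamPart μ j :=
        Finset.sum_le_sum_of_subset (Finset.range_subset_range.2 h)
      _ = n := Lam_n hμ
  · rw [Finset.range_eq_Ico, ← Finset.sum_Ico_consecutive _ (Nat.zero_le n) h,
      ← Finset.range_eq_Ico, Lam_n hμ]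
    have : ∑ j ∈ Finset.Ico n k, lamPart μ j = 0 := by
      apply Finset.sum_eq_zero
      intro j hj
      exact lamPart_eq_zero hμ (Finset.mem_Ico.1 hj).1
    omega

omit hμ in
lemma Lam_mono {k l : ℕ} (h : k ≤ l) :
    ∑ j ∈ Finset.range k, lamPart μ j ≤ ∑ j ∈ Finset.range l, lamPart μ j :=
  Finset.sum_le_sum_of_subset (Finset.range_subset_range.2 h)

end Numeric

section Nu

variable {n : ℕ} (c : Fin n → ℤ)

def VS (S : Finset ℤ) : Finset (Fin n) := Finset.univ.filter (fun j => c j ∈ S)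

lemma sum_nu_eq_card (S : Finset ℤ) : ∑ i ∈ S, nuPart n c i = (VS c S).card := by
  simp only [VS]
  rw [Finset.card_eq_sum_card_fiberwise (f := c) (s := Finset.univ.filter (fun j => c j ∈ S)) (t := S)
    (fun x hx => (Finset.mem_filter.1 hx).2)]
  refine Finset.sum_congr rfl fun i hi => ?_
  rw [nuPart]
  congr 1
  ext j
  simp only [Finset.mem_filter, Finset.mem_univ, true_and]
  exact ⟨fun h => ⟨h ▸ hi, h⟩, fun h => h.2⟩

lemma VS_compl (S : Finset ℤ) :
    VS c ((Finset.image c Finset.univ) \ S) = Finset.univ \ VS c S := by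
  ext j
  simp only [VS, Finset.mem_filter, Finset.mem_univ, true_and, Finset.mem_sdiff,
    Finset.mem_image]
  tauto

lemma VS_disj_compl (S : Finset ℤ) :
    Disjoint (VS c S) (VS c ((Finset.image c Finset.univ) \ S)) := by
  rw [VS_compl]
  exact Finset.disjoint_sdiff

lemma VS_union_compl (S : Finset ℤ) :
    VS c S ∪ VS c ((Finset.image c Finset.univ) \ S) = Finset.univ := by
  rw [VS_compl, Finset.union_sdiff_of_subset (Finset.subset_univ _)]

lemma card_VS_compl (S : Finset ℤ) :
    (VS c ((Finset.image c Finset.univ) \ S)).card = n - (VS c S).card := by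
  rw [VS_compl, Finset.card_sdiff_of_subset (Finset.subset_univ _)]
  simp

lemma card_VS_le (S : Finset ℤ) : (VS c S).card ≤ n := by
  calc (VS c S).card ≤ Finset.univ.card := Finset.card_le_card (Finset.subset_univ _)
    _ = n := by simp

lemma card_B_le : (Finset.image c Finset.univ).card ≤ n := by
  calc (Finset.image c Finset.univ).card ≤ Finset.univ.card := Finset.card_image_le
    _ = n := by simp

lemma VS_B : VS c (Finset.image c Finset.univ) = Finset.univ := by
  ext j
  simp [VS]

lemma VS_empty : VS c (∅ : Finset ℤ) = ∅ := by
  ext j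
  simp [VS]

end Nu

set_option maxHeartbeats 1000000
set_option synthInstance.maxHeartbeats 400000

section Elements

variable (n : ℕ) (c : Fin n → ℤ)

lemma hIn_eq_hp (S : Finset ℤ) (r : ℕ) : hIn n c S r = hp (VS c S) r := rfl

lemma eIn_eq_ep (S : Finset ℤ) (r : ℕ) : eIn n c S r = ep (VS c S) r := rfl

lemma mem_VS_perm (σ : Equiv.Perm (Fin n)) (hσ : σ ∈ youngSubgroup n c) (S : Finset ℤ) :
    ∀ j, σ j ∈ VS c S ↔ j ∈ VS c S := by
  intro j
  have hc : c (σ j) = c j := hσ j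
  simp only [VS, Finset.mem_filter, Finset.mem_univ, true_and, hc]

lemma hIn_mem_inv (S : Finset ℤ) (r : ℕ) :
    hIn n c S r ∈ invariantSubalgebra n (youngSubgroup n c) := by
  intro σ hσ
  rw [hIn_eq_hp]
  exact hp_rename σ _ (mem_VS_perm n c σ hσ S) r

lemma eIn_mem_inv (S : Finset ℤ) (r : ℕ) :
    eIn n c S r ∈ invariantSubalgebra n (youngSubgroup n c) := by
  intro σ hσ
  rw [eIn_eq_ep]
  exact ep_rename σ _ (mem_VS_perm n c σ hσ S) r

noncomputable def He (S : Finset ℤ) (r : ℕ) :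
    ↥(invariantSubalgebra n (youngSubgroup n c)) :=
  ⟨hIn n c S r, hIn_mem_inv n c S r⟩

noncomputable def Ee (S : Finset ℤ) (r : ℕ) :
    ↥(invariantSubalgebra n (youngSubgroup n c)) :=
  ⟨eIn n c S r, eIn_mem_inv n c S r⟩

@[simp] lemma He_coe (S : Finset ℤ) (r : ℕ) :
    ((He n c S r : ↥(invariantSubalgebra n (youngSubgroup n c))) :
      MvPolynomial (Fin n) ℂ) = hIn n c S r := rfl

@[simp] lemma Ee_coe (S : Finset ℤ) (r : ℕ) :
    ((Ee n c S r : ↥(invariantSubalgebra n (youngSubgroup n c))) :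
      MvPolynomial (Fin n) ℂ) = eIn n c S r := rfl

lemma He_zero_eq_one (S : Finset ℤ) : He n c S 0 = 1 := by
  apply Subtype.ext
  rw [He_coe, hIn_eq_hp, hp_zero]
  rfl

lemma Ee_zero_eq_one (S : Finset ℤ) : Ee n c S 0 = 1 := by
  apply Subtype.ext
  rw [Ee_coe, eIn_eq_ep, ep_zero]
  rfl

lemma He_empty_VS (S : Finset ℤ) (r : ℕ) (hr : r ≠ 0) (hVS : VS c S = ∅) :
    He n c S r = 0 := by
  apply Subtype.ext
  rw [He_coe, hIn_eq_hp, hVS, hp_empty r hr]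
  rfl

lemma Ee_empty_VS (S : Finset ℤ) (r : ℕ) (hr : r ≠ 0) (hVS : VS c S = ∅) :
    Ee n c S r = 0 := by
  apply Subtype.ext
  rw [Ee_coe, eIn_eq_ep, hVS, ep_empty r hr]
  rfl

/-- Key identity at the level of the invariant subalgebra. -/
lemma keyId (S T : Finset ℤ) (hd : Disjoint (VS c S) (VS c T))
    (hu : VS c S ∪ VS c T = Finset.univ) (r : ℕ) :
    He n c S r = ∑ p ∈ Finset.HasAntidiagonal.antidiagonal r,
      ((-1) ^ p.1 * Ee n c T p.1) * He n c (Finset.image c Finset.univ) p.2 := by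
  apply Subtype.ext
  push_cast
  rw [He_coe, hIn_eq_hp, hp_eq_sum_ep_hp hd hu r]
  apply Finset.sum_congr rfl
  intro p _
  rw [He_coe, Ee_coe, hIn_eq_hp, eIn_eq_ep, VS_B]

lemma newtonP (k : ℕ) (hk : k ≠ 0) :
    ∑ p ∈ Finset.HasAntidiagonal.antidiagonal k,
      ((-1) ^ p.1 * Ee n c (Finset.image c Finset.univ) p.1) *
        He n c (Finset.image c Finset.univ) p.2 = 0 := by
  apply Subtype.ext
  push_cast
  rw [← newton_sum k hk]
  apply Finset.sum_congr rfl
  intro p _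
  rw [He_coe, Ee_coe, hIn_eq_hp, eIn_eq_ep, VS_B]

end Elements

section Ideals

variable (n : ℕ) (μ : ℤ →₀ ℕ) (c : Fin n → ℤ)

def hSet : Set ↥(invariantSubalgebra n (youngSubgroup n c)) :=
  {f | ∃ (S : Finset ℤ) (r : ℕ), S.Nonempty ∧
    ((∑ j ∈ Finset.range S.card, (lamPart μ j : ℤ)) -
        ∑ i ∈ S, (nuPart n c i : ℤ)) < (r : ℤ) ∧
    (↑f : MvPolynomial (Fin n) ℂ) = hIn n c S r}

def eSet : Set ↥(invariantSubalgebra n (youngSubgroup n c)) :=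
  {f | ∃ (S : Finset ℤ) (r : ℕ), S.Nonempty ∧
    ((∑ i ∈ S, (nuPart n c i : ℤ)) -
        ∑ j ∈ Finset.Ico ((Finset.image c Finset.univ \ S).card) n,
          (lamPart μ j : ℤ)) < (r : ℤ) ∧
    (↑f : MvPolynomial (Fin n) ℂ) = eIn n c S r}

variable {n μ c}
variable (hμ : μ.sum (fun _ m => m) = n)

lemma nusum_cast (S : Finset ℤ) :
    (∑ i ∈ S, (nuPart n c i : ℤ)) = ((VS c S).card : ℤ) := by
  rw [← sum_nu_eq_card]
  push_cast
  rfl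

lemma lamsum_cast (k : ℕ) :
    (∑ j ∈ Finset.range k, (lamPart μ j : ℤ)) =
      ((∑ j ∈ Finset.range k, lamPart μ j : ℕ) : ℤ) := by
  push_cast
  rfl

lemma lamIco_cast (k : ℕ) :
    (∑ j ∈ Finset.Ico k n, (lamPart μ j : ℤ)) =
      ((∑ j ∈ Finset.Ico k n, lamPart μ j : ℕ) : ℤ) := by
  push_cast
  rfl

include hμ in
/-- `h_k` of all the variables is an `h`-generator (or zero). -/
lemma He_B_mem_hSpan (k : ℕ) (hk : k ≠ 0) :
    He n c (Finset.image c Finset.univ) k ∈ Ideal.span (hSet n μ c) := by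
  by_cases hB : (Finset.image c Finset.univ).Nonempty
  · apply Ideal.subset_span
    refine ⟨_, k, hB, ?_, rfl⟩
    rw [nusum_cast, lamsum_cast, VS_B, Finset.card_univ, Fintype.card_fin]
    have h1 := Lam_le hμ (Finset.image c Finset.univ).card
    omega
  · rw [Finset.not_nonempty_iff_eq_empty] at hB
    rw [hB, He_empty_VS n c ∅ k hk (VS_empty c)]
    exact Ideal.zero_mem _

include hμ in
/-- `e_k` of all the variables is an `e`-generator (or zero). -/
lemma Ee_B_mem_eSpan (k : ℕ) (hk : k ≠ 0) :
    Ee n c (Finset.image c Finset.univ) k ∈ Ideal.span (eSet n μ c) := by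
  by_cases hB : (Finset.image c Finset.univ).Nonempty
  · apply Ideal.subset_span
    refine ⟨_, k, hB, ?_, rfl⟩
    rw [nusum_cast, lamIco_cast, VS_B, Finset.card_univ, Fintype.card_fin,
      Finset.sdiff_self, Finset.card_empty]
    have h1 := Lam_split hμ (Nat.zero_le n)
    rw [Finset.range_zero, Finset.sum_empty, zero_add] at h1
    omega
  · rw [Finset.not_nonempty_iff_eq_empty] at hB
    rw [hB, Ee_empty_VS n c ∅ k hk (VS_empty c)]
    exact Ideal.zero_mem _

include hμ in
/-- `h_k` of all the variables lies in the ideal generated by `e`-generators. -/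
lemma He_B_mem_eSpan (k : ℕ) (hk : k ≠ 0) :
    He n c (Finset.image c Finset.univ) k ∈ Ideal.span (eSet n μ c) := by
  have hnewton := newtonP n c k hk
  have hmem : ((0 : ℕ), k) ∈ Finset.HasAntidiagonal.antidiagonal k := by
    simp [Finset.HasAntidiagonal.mem_antidiagonal]
  have hsplit := Finset.sum_erase_add (Finset.HasAntidiagonal.antidiagonal k)
    (fun p => ((-1) ^ p.1 * Ee n c (Finset.image c Finset.univ) p.1) *
      He n c (Finset.image c Finset.univ) p.2) hmem
  rw [hnewton] at hsplit
  have hzero : ((-1) ^ (0:ℕ) * Ee n c (Finset.image c Finset.univ) 0) *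
      He n c (Finset.image c Finset.univ) k =
      He n c (Finset.image c Finset.univ) k := by
    rw [Ee_zero_eq_one, pow_zero, one_mul, one_mul]
  have hkey : He n c (Finset.image c Finset.univ) k =
      -∑ p ∈ (Finset.HasAntidiagonal.antidiagonal k).erase (0, k),
        ((-1) ^ p.1 * Ee n c (Finset.image c Finset.univ) p.1) *
          He n c (Finset.image c Finset.univ) p.2 := by
    have := hsplit
    simp only [hzero] at this
    exact eq_neg_of_add_eq_zero_right (by linear_combination this)
  rw [hkey]
  apply neg_mem
  apply Ideal.sum_mem
  intro p hp
  have hp1 : p.1 ≠ 0 := by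
    intro h0
    have hmem' := Finset.mem_of_mem_erase hp
    rw [Finset.HasAntidiagonal.mem_antidiagonal] at hmem'
    have hpk : p = ((0:ℕ), k) := by
      ext
      · exact h0
      · omega
    rw [hpk] at hp
    exact Finset.notMem_erase (0, k) (Finset.HasAntidiagonal.antidiagonal k) hp
  exact Ideal.mul_mem_right _ _
    (Ideal.mul_mem_left _ _ (Ee_B_mem_eSpan hμ p.1 hp1))

end Ideals

section Main

variable {n : ℕ} {μ : ℤ →₀ ℕ} {c : Fin n → ℤ}
variable (hμ : μ.sum (fun _ m => m) = n)
include hμ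

/-- Every `e`-generator lies in the span of the `h`-generators. -/
lemma Ee_mem_hSpan (S : Finset ℤ) (r : ℕ)
    (hcond : ((∑ i ∈ S, (nuPart n c i : ℤ)) -
        ∑ j ∈ Finset.Ico ((Finset.image c Finset.univ \ S).card) n,
          (lamPart μ j : ℤ)) < (r : ℤ)) :
    Ee n c S r ∈ Ideal.span (hSet n μ c) := by
  classical
  set B := Finset.image c Finset.univ with hB
  set T := B \ S with hT
  have hsn : (VS c S).card ≤ n := card_VS_le c S
  have hTcard : (VS c T).card = n - (VS c S).card := card_VS_compl c S
  have hTn : T.card ≤ n := le_trans (Finset.card_le_card Finset.sdiff_subset) (card_B_le c)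
  have hLsplit := Lam_split hμ hTn
  have hcond' := hcond
  rw [nusum_cast, lamIco_cast] at hcond'
  -- the translated condition for `h`-generators on `T`
  have hcondh : ((∑ j ∈ Finset.range T.card, (lamPart μ j : ℤ)) -
      ∑ i ∈ T, (nuPart n c i : ℤ)) < (r : ℤ) := by
    rw [lamsum_cast, nusum_cast, hTcard]
    omega
  cases r with
  | zero =>
    have hTne : T.Nonempty := by
      by_contra hne
      rw [Finset.not_nonempty_iff_eq_empty] at hne
      have h1 : VS c T = Finset.univ \ VS c S := VS_compl c S
      rw [hne, VS_empty] at h1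
      have h2 : VS c S = Finset.univ := by
        have := Finset.sdiff_eq_empty_iff_subset.1 h1.symm
        exact Finset.univ_subset_iff.1 this
      rw [h2, Finset.card_univ, Fintype.card_fin] at hcond'
      omega
    rw [Ee_zero_eq_one, ← He_zero_eq_one n c T]
    exact Ideal.subset_span ⟨T, 0, hTne, by exact_mod_cast hcondh, rfl⟩
  | succ k =>
    set r := k + 1
    have hrne : r ≠ 0 := Nat.succ_ne_zero k
    -- membership of h_r(T)
    have hHeT : He n c T r ∈ Ideal.span (hSet n μ c) := by
      by_cases hTne : T.Nonempty
      · exact Ideal.subset_span ⟨T, r, hTne, hcondh, rfl⟩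
      · rw [Finset.not_nonempty_iff_eq_empty] at hTne
        rw [hTne, He_empty_VS n c ∅ r hrne (VS_empty c)]
        exact Ideal.zero_mem _
    -- the key identity
    have hid := keyId n c T S ((VS_disj_compl c S).symm)
      (by rw [Finset.union_comm]; exact VS_union_compl c S) r
    have hmem0 : ((r : ℕ), (0 : ℕ)) ∈ Finset.HasAntidiagonal.antidiagonal r := by simp
    have hid2 : He n c T r =
        (∑ p ∈ (Finset.HasAntidiagonal.antidiagonal r).erase (r, 0),
          ((-1) ^ p.1 * Ee n c S p.1) * He n c B p.2) +
        (-1 : ↥(invariantSubalgebra n (youngSubgroup n c))) ^ r * Ee n c S r := by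
      rw [hid, ← Finset.sum_erase_add _ _ hmem0]
      simp [He_zero_eq_one]
      rfl
    set u : ↥(invariantSubalgebra n (youngSubgroup n c)) := (-1) ^ r with hu_def
    have hu : u * u = 1 := by
      rw [hu_def, ← pow_add, ← two_mul, pow_mul]
      norm_num
    have heq : Ee n c S r = u * He n c T r -
        u * ∑ p ∈ (Finset.HasAntidiagonal.antidiagonal r).erase (r, 0),
          ((-1) ^ p.1 * Ee n c S p.1) * He n c B p.2 := by
      linear_combination (-u) * hid2 - Ee n c S r * hu
    rw [heq]
    apply sub_mem
    · exact Ideal.mul_mem_left _ u hHeT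
    · refine Ideal.mul_mem_left _ u (Ideal.sum_mem _ fun p hp => ?_)
      have hp2 : p.2 ≠ 0 := by
        intro h0
        have hmem' := Finset.HasAntidiagonal.mem_antidiagonal.1 (Finset.mem_of_mem_erase hp)
        have hpk : p = ((r : ℕ), (0 : ℕ)) := by
          ext
          · omega
          · exact h0
        rw [hpk] at hp
        exact Finset.notMem_erase _ _ hp
      exact Ideal.mul_mem_left _ _ (He_B_mem_hSpan hμ p.2 hp2)

/-- Every `h`-generator lies in the span of the `e`-generators. -/
lemma He_mem_eSpan (S : Finset ℤ) (r : ℕ)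
    (hcond : ((∑ j ∈ Finset.range S.card, (lamPart μ j : ℤ)) -
        ∑ i ∈ S, (nuPart n c i : ℤ)) < (r : ℤ)) :
    He n c S r ∈ Ideal.span (eSet n μ c) := by
  classical
  set B := Finset.image c Finset.univ with hB
  set T := B \ S with hT
  have hsn : (VS c S).card ≤ n := card_VS_le c S
  have hTcard : (VS c T).card = n - (VS c S).card := card_VS_compl c S
  have hBT : B \ T = B ∩ S := by
    rw [hT, sdiff_sdiff_right_self, Finset.inf_eq_inter]
  have hl1 : (B ∩ S).card ≤ S.card := Finset.card_le_card Finset.inter_subset_right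
  have hl2 : (B ∩ S).card ≤ n :=
    le_trans (Finset.card_le_card Finset.inter_subset_left) (card_B_le c)
  have hLsplit := Lam_split hμ hl2
  have hLmono := Lam_mono (μ := μ) hl1
  have hcond' := hcond
  rw [nusum_cast, lamsum_cast] at hcond'
  -- the translated condition for `e`-generators on `T`
  have hconde : ((∑ i ∈ T, (nuPart n c i : ℤ)) -
      ∑ j ∈ Finset.Ico ((B \ T).card) n, (lamPart μ j : ℤ)) < (r : ℤ) := by
    rw [nusum_cast, lamIco_cast, hTcard, hBT]
    omega
  cases r with
  | zero =>
    by_cases hTne : T.Nonempty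
    · rw [He_zero_eq_one, ← Ee_zero_eq_one n c T]
      exact Ideal.subset_span ⟨T, 0, hTne, by exact_mod_cast hconde, rfl⟩
    · rw [Finset.not_nonempty_iff_eq_empty] at hTne
      have hBS : B ⊆ S := Finset.sdiff_eq_empty_iff_subset.1 hTne
      obtain ⟨z, hz⟩ := Infinite.exists_notMem_finset B
      have hnu : nuPart n c z = 0 := by
        rw [nuPart, Finset.card_eq_zero, Finset.filter_eq_empty_iff]
        intro j _
        intro hc
        exact hz (hB ▸ Finset.mem_image.2 ⟨j, Finset.mem_univ j, hc⟩)
      have hBz : B \ ({z} : Finset ℤ) = B :=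
        sdiff_eq_self_iff_disjoint.2 (Finset.disjoint_singleton_left.2 hz)
      have hcBS : B.card ≤ S.card := Finset.card_le_card hBS
      have hLB := Lam_mono (μ := μ) hcBS
      have hLsplitB := Lam_split hμ (card_B_le c)
      rw [← hB] at hLsplitB
      rw [He_zero_eq_one, ← Ee_zero_eq_one n c {z}]
      refine Ideal.subset_span ⟨{z}, 0, Finset.singleton_nonempty z, ?_, rfl⟩
      rw [Finset.sum_singleton, hnu, lamIco_cast, hBz]
      omega
  | succ k =>
    set r := k + 1
    have hrne : r ≠ 0 := Nat.succ_ne_zero k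
    have hEeT : Ee n c T r ∈ Ideal.span (eSet n μ c) := by
      by_cases hTne : T.Nonempty
      · exact Ideal.subset_span ⟨T, r, hTne, hconde, rfl⟩
      · rw [Finset.not_nonempty_iff_eq_empty] at hTne
        rw [hTne, Ee_empty_VS n c ∅ r hrne (VS_empty c)]
        exact Ideal.zero_mem _
    have hid := keyId n c S T (VS_disj_compl c S) (VS_union_compl c S) r
    rw [hid]
    refine Ideal.sum_mem _ fun p hp => ?_
    by_cases hp2 : p.2 = 0
    · have hmem' := Finset.HasAntidiagonal.mem_antidiagonal.1 hp
      have hp1 : p.1 = r := by omega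
      rw [hp1]
      exact Ideal.mul_mem_right _ _ (Ideal.mul_mem_left _ _ hEeT)
    · exact Ideal.mul_mem_left _ _ (He_B_mem_eSpan hμ p.2 hp2)

end Main

/-- Tanisaki-type ideal `I^μ_ν`: the two generating sets, by complete symmetric
functions `h_r(ν; i_1,…,i_m)` with `r > λ_1+⋯+λ_m − ν_{i_1}−⋯−ν_{i_m}`, and by
elementary symmetric functions `e_r(ν; i_1,…,i_m)` with
`r > ν_{i_1}+⋯+ν_{i_m} − λ_{l+1}−λ_{l+2}−⋯` where
`l = #{i | ν_i > 0, i ∉ {i_1,…,i_m}}`, span the same ideal of `P_ν`. -/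
theorem tanisaki_ideal_h_generators_eq_e_generators (n : ℕ) (μ : ℤ →₀ ℕ)
    (hμ : μ.sum (fun _ m => m) = n) (c : Fin n → ℤ) :
    Ideal.span {f : ↥(invariantSubalgebra n (youngSubgroup n c)) |
        ∃ (S : Finset ℤ) (r : ℕ), S.Nonempty ∧
          ((∑ j ∈ Finset.range S.card, (lamPart μ j : ℤ)) -
              ∑ i ∈ S, (nuPart n c i : ℤ)) < (r : ℤ) ∧
          (↑f : MvPolynomial (Fin n) ℂ) = hIn n c S r} =
      Ideal.span {f : ↥(invariantSubalgebra n (youngSubgroup n c)) |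
        ∃ (S : Finset ℤ) (r : ℕ), S.Nonempty ∧
          ((∑ i ∈ S, (nuPart n c i : ℤ)) -
              ∑ j ∈ Finset.Ico ((Finset.image c Finset.univ \ S).card) n,
                (lamPart μ j : ℤ)) < (r : ℤ) ∧
          (↑f : MvPolynomial (Fin n) ℂ) = eIn n c S r} := by
  
  show Ideal.span (hSet n μ c) = Ideal.span (eSet n μ c)
  apply le_antisymm
  · rw [Ideal.span_le]
    rintro f ⟨S, r, hS, hcond, hcoe⟩
    have hf : f = He n c S r := Subtype.ext hcoe
    rw [SetLike.mem_coe, hf]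
    exact He_mem_eSpan hμ S r hcond
  · rw [Ideal.span_le]
    rintro f ⟨S, r, hS, hcond, hcoe⟩
    have hf : f = Ee n c S r := Subtype.ext hcoe
    rw [SetLike.mem_coe, hf]
    exact Ee_mem_hSpan hμ S r hcond
end

section
/- With notation as in the Tanisaki-type presentation, the graded algebra C^μ_ν = P_ν / I^μ_ν is nonzero if and only if λ ≥ ν⁺ in the dominance order, where λ is the transpose partition of μ and ν⁺ is the partition obtained by sorting ν. -/
open Finset MvPolynomial

set_option synthInstance.maxHeartbeats 1000000 in
set_option maxHeartbeats 2000000 in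
/-- The algebra `C^μ_ν = P_ν / I^μ_ν` is nonzero if and only if `λ ≥ ν⁺` in the
dominance order, i.e. iff `λ_1+⋯+λ_m ≥ ν_{i_1}+⋯+ν_{i_m}` for all distinct `i_1,…,i_m`. -/
theorem tanisaki_quotient_nontrivial_iff_dominance (n : ℕ) (μ : ℤ →₀ ℕ)
    (hμ : μ.sum (fun _ m => m) = n) (c : Fin n → ℤ) :
    Nontrivial (↥(invariantSubalgebra n (youngSubgroup n c)) ⧸
        Ideal.span {f : ↥(invariantSubalgebra n (youngSubgroup n c)) |
          ∃ (S : Finset ℤ) (r : ℕ), S.Nonempty ∧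
            ((∑ j ∈ Finset.range S.card, (lamPart μ j : ℤ)) -
                ∑ i ∈ S, (nuPart n c i : ℤ)) < (r : ℤ) ∧
            (↑f : MvPolynomial (Fin n) ℂ) = hIn n c S r}) ↔
      ∀ S : Finset ℤ, ∑ i ∈ S, nuPart n c i ≤ ∑ j ∈ Finset.range S.card, lamPart μ j := by
  classical
  constructor
  · intro hnt S
    by_contra hS
    have hSne : S.Nonempty := by
      rcases Finset.eq_empty_or_nonempty S with h | h
      · subst h; simp at hS
      · exact h
    have hlt : ∑ j ∈ Finset.range S.card, lamPart μ j < ∑ i ∈ S, nuPart n c i :=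
      Nat.lt_of_not_le hS
    have h1mem : (1 : ↥(invariantSubalgebra n (youngSubgroup n c))) ∈
        {f : ↥(invariantSubalgebra n (youngSubgroup n c)) |
          ∃ (S : Finset ℤ) (r : ℕ), S.Nonempty ∧
            ((∑ j ∈ Finset.range S.card, (lamPart μ j : ℤ)) -
                ∑ i ∈ S, (nuPart n c i : ℤ)) < (r : ℤ) ∧
            (↑f : MvPolynomial (Fin n) ℂ) = hIn n c S r} := by
      refine ⟨S, 0, hSne, ?_, ?_⟩
      · have h1 : (∑ j ∈ Finset.range S.card, (lamPart μ j : ℤ)) =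
            ((∑ j ∈ Finset.range S.card, lamPart μ j : ℕ) : ℤ) := by push_cast; ring
        have h2 : (∑ i ∈ S, (nuPart n c i : ℤ)) =
            ((∑ i ∈ S, nuPart n c i : ℕ) : ℤ) := by push_cast; ring
        rw [h1, h2]
        omega
      · simp only [hIn, Finset.sym_zero, Finset.sum_singleton]
        rfl
    have h1span : (1 : ↥(invariantSubalgebra n (youngSubgroup n c))) ∈
        Ideal.span {f : ↥(invariantSubalgebra n (youngSubgroup n c)) |
          ∃ (S : Finset ℤ) (r : ℕ), S.Nonempty ∧
            ((∑ j ∈ Finset.range S.card, (lamPart μ j : ℤ)) -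
                ∑ i ∈ S, (nuPart n c i : ℤ)) < (r : ℤ) ∧
            (↑f : MvPolynomial (Fin n) ℂ) = hIn n c S r} := Ideal.subset_span h1mem
    have hsub : Subsingleton (↥(invariantSubalgebra n (youngSubgroup n c)) ⧸
        Ideal.span {f : ↥(invariantSubalgebra n (youngSubgroup n c)) |
          ∃ (S : Finset ℤ) (r : ℕ), S.Nonempty ∧
            ((∑ j ∈ Finset.range S.card, (lamPart μ j : ℤ)) -
                ∑ i ∈ S, (nuPart n c i : ℤ)) < (r : ℤ) ∧
            (↑f : MvPolynomial (Fin n) ℂ) = hIn n c S r}) := by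
      rw [Ideal.Quotient.subsingleton_iff]
      exact (Ideal.eq_top_iff_one _).mpr h1span
    exact not_nontrivial_iff_subsingleton.mpr hsub hnt
  · intro h
    refine Ideal.Quotient.nontrivial_iff.mpr ?_
    intro htop
    set φ : ↥(invariantSubalgebra n (youngSubgroup n c)) →ₐ[ℂ] ℂ :=
      (MvPolynomial.aeval (0 : Fin n → ℂ)).comp
        (invariantSubalgebra n (youngSubgroup n c)).val with hφ
    have hker : Ideal.span {f : ↥(invariantSubalgebra n (youngSubgroup n c)) |
          ∃ (S : Finset ℤ) (r : ℕ), S.Nonempty ∧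
            ((∑ j ∈ Finset.range S.card, (lamPart μ j : ℤ)) -
                ∑ i ∈ S, (nuPart n c i : ℤ)) < (r : ℤ) ∧
            (↑f : MvPolynomial (Fin n) ℂ) = hIn n c S r} ≤ RingHom.ker φ.toRingHom := by
      rw [Ideal.span_le]
      rintro f ⟨S, r, hSne, hr, hf⟩
      have hr0 : r ≠ 0 := by
        have hS := h S
        have h1 : (∑ j ∈ Finset.range S.card, (lamPart μ j : ℤ)) =
            ((∑ j ∈ Finset.range S.card, lamPart μ j : ℕ) : ℤ) := by push_cast; ring
        have h2 : (∑ i ∈ S, (nuPart n c i : ℤ)) =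
            ((∑ i ∈ S, nuPart n c i : ℕ) : ℤ) := by push_cast; ring
        rw [h1, h2] at hr
        omega
      have key : (MvPolynomial.aeval (0 : Fin n → ℂ)) (hIn n c S r) = 0 := by
        rw [hIn, map_sum]
        refine Finset.sum_eq_zero fun m _ => ?_
        rw [map_multiset_prod, Multiset.map_map]
        have hc : ((MvPolynomial.aeval (0 : Fin n → ℂ)) ∘ (X : Fin n → MvPolynomial (Fin n) ℂ))
            = Function.const (Fin n) (0 : ℂ) := by
          funext j; simp [Function.const]
        rw [hc, Multiset.map_const, Multiset.prod_replicate, Sym.card_coe, zero_pow hr0]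
      show φ f = 0
      rw [hφ]
      simpa [hf] using key
    have h1 : (1 : ↥(invariantSubalgebra n (youngSubgroup n c))) ∈
        RingHom.ker φ.toRingHom := hker (htop ▸ Submodule.mem_top)
    rw [RingHom.mem_ker, map_one] at h1
    exact one_ne_zero h1
end

section
/- Let C_ν ⊆ C_{ν,ν'} be commutative rings where C_{ν,ν'} is free as a C_ν-module with basis 1, x, x², …, x^a for some element x ∈ C_{ν,ν'} satisfying e_s-relations of the partial coinvariant algebra; concretely, suppose x^{a+r} = ∑_{s=0}^{a}∑_{t=0}^{s}(−1)^{s−t} e_{s−t} h_{r+t} x^{a−s} for all r ≥ 1, where e_j, h_j ∈ C_ν with the standard relations ∑_{s=0}^{r}(−1)^s e_s h_{r−s} = 0 for r ≥ 1, e_0 = h_0 = 1, e_j = 0 for j > a+1. Then the C_ν-linear map δ_0 : C_{ν,ν'} → C_ν determined by δ_0(x^s) = 0 for 0 ≤ s < a and δ_0(x^a) = (−1)^a satisfies δ_0(x^r) = (−1)^a h_{r−a} for all r ≥ 0, and the maps δ_0, xδ_0, …, x^aδ_0 form a C_ν-basis of Hom_{C_ν}(C_{ν,ν'}, C_ν).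 -/
open Finset

/-- Key duality computation for partial coinvariant algebras: if `B` is free over `A`
with basis `1, x, …, x^a` and `x` satisfies the expansion relations coming from
symmetric functions `e_j, h_j ∈ A`, then the `A`-linear map `δ₀ : B → A` with
`δ₀(x^s) = 0` for `s < a` and `δ₀(x^a) = (−1)^a` satisfies
`δ₀(x^r) = (−1)^a h_{r−a}` for all `r ≥ 0`, and `δ₀, xδ₀, …, x^aδ₀` form an `A`-basis
of `Hom_A(B, A)`. -/
theorem delta_basis_of_hom (A B : Type*) [CommRing A] [CommRing B] [Algebra A B]
    (x : B) (a : ℕ)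
    (bas : Module.Basis (Fin (a + 1)) A B) (hbas : ∀ i : Fin (a + 1), bas i = x ^ (i : ℕ))
    (e h : ℕ → A) (he0 : e 0 = 1) (hh0 : h 0 = 1)
    (hrel : ∀ r : ℕ, 1 ≤ r →
      ∑ s ∈ Finset.range (r + 1), (-1 : A) ^ s * e s * h (r - s) = 0)
    (hetop : ∀ j : ℕ, a + 1 < j → e j = 0)
    (hx : ∀ r : ℕ, 1 ≤ r →
      x ^ (a + r) = ∑ s ∈ Finset.range (a + 1), ∑ t ∈ Finset.range (s + 1),
        ((-1 : A) ^ (s - t) * (e (s - t) * h (r + t))) • x ^ (a - s))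
    (δ0 : B →ₗ[A] A)
    (hδlt : ∀ s : ℕ, s < a → δ0 (x ^ s) = 0)
    (hδa : δ0 (x ^ a) = (-1 : A) ^ a) :
    (∀ r : ℕ, δ0 (x ^ r) = if a ≤ r then (-1 : A) ^ a * h (r - a) else 0) ∧
    (∃ bb : Module.Basis (Fin (a + 1)) A (B →ₗ[A] A),
      ∀ (i : Fin (a + 1)) (y : B), bb i y = δ0 (x ^ (i : ℕ) * y)) := by
  classical
  have key : ∀ r : ℕ, δ0 (x ^ r) = if a ≤ r then (-1 : A) ^ a * h (r - a) else 0 := by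
    intro r
    rcases lt_or_ge r a with hr | hr
    · rw [if_neg (not_le.mpr hr), hδlt r hr]
    · rw [if_pos hr]
      rcases Nat.eq_or_lt_of_le hr with heq | hlt
      · rw [← heq, hδa, Nat.sub_self, hh0, mul_one]
      · obtain ⟨k, hk1, rfl⟩ : ∃ k, 1 ≤ k ∧ r = a + k := ⟨r - a, by omega, by omega⟩
        rw [hx k hk1, map_sum, Finset.sum_eq_single 0]
        · simp [hδa, hh0, he0, Nat.add_sub_cancel_left, mul_comm]
        · intro s hs hs0
          rw [map_sum]
          refine Finset.sum_eq_zero fun t _ => ?_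
          have hsa : s ≤ a := Nat.lt_succ_iff.mp (Finset.mem_range.mp hs)
          have hs1 : 1 ≤ s := Nat.one_le_iff_ne_zero.mpr hs0
          rw [map_smul, hδlt (a - s) (by omega), smul_zero]
        · intro hh; exact absurd (Finset.mem_range.mpr (Nat.succ_pos a)) hh
  refine ⟨key, ?_⟩
  set d := bas.dualBasis with hd
  set M : Matrix (Fin (a + 1)) (Fin (a + 1)) A :=
    Matrix.of fun i j => δ0 (x ^ ((i : ℕ) + (j : ℕ))) with hM
  have hNentry : ∀ i j : Fin (a + 1),
      (M.submatrix id Fin.revPerm) i j = δ0 (x ^ ((i : ℕ) + (a - (j : ℕ)))) := by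
    intro i j
    have : ((Fin.rev j : Fin (a + 1)) : ℕ) = a - (j : ℕ) := by
      rw [Fin.val_rev]; omega
    simp [hM, Matrix.submatrix, Fin.revPerm, this]
  have hNtri : (M.submatrix id Fin.revPerm).BlockTriangular OrderDual.toDual := by
    intro i j hij
    rw [hNentry]
    refine hδlt _ ?_
    have hi : (i : ℕ) ≤ a := Nat.lt_succ_iff.mp i.isLt
    have hj : (j : ℕ) ≤ a := Nat.lt_succ_iff.mp j.isLt
    have hij' : (i : ℕ) < (j : ℕ) := hij
    omega
  have hNdiag : ∀ i : Fin (a + 1),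
      (M.submatrix id Fin.revPerm) i i = (-1 : A) ^ a := by
    intro i
    rw [hNentry]
    have hi : (i : ℕ) ≤ a := Nat.lt_succ_iff.mp i.isLt
    rw [show (i : ℕ) + (a - (i : ℕ)) = a by omega, hδa]
  have hdetN : IsUnit (M.submatrix id Fin.revPerm).det := by
    rw [Matrix.det_of_lowerTriangular _ hNtri]
    have : ∀ i ∈ (Finset.univ : Finset (Fin (a+1))), (M.submatrix id Fin.revPerm) i i = (-1 : A) ^ a :=
      fun i _ => hNdiag i
    rw [Finset.prod_congr rfl this, Finset.prod_const]
    exact ((isUnit_one.neg).pow a).pow _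
  have hdetM : IsUnit M.det := by
    rw [Matrix.det_permute' Fin.revPerm M] at hdetN
    exact (IsUnit.mul_iff.mp hdetN).2
  have hdetMT : IsUnit M.transpose.det := by rwa [Matrix.det_transpose]
  have hf : IsUnit (LinearMap.toMatrix d d (Matrix.toLin d d M.transpose)).det := by
    rwa [LinearMap.toMatrix_toLin]
  refine ⟨d.map (LinearEquiv.ofIsUnitDet hf), fun i y => ?_⟩
  have hmap : (d.map (LinearEquiv.ofIsUnitDet hf)) i
      = Matrix.toLin d d M.transpose (d i) := by
    simp [Module.Basis.map_apply, LinearEquiv.ofIsUnitDet]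
  rw [hmap, Matrix.toLin_self]
  -- now prove ∑ k, M.transpose k i • d k = δ0 ∘ (mul by x^i) as linear functionals, applied to y
  have : (∑ k, M.transpose k i • d k) = δ0.comp (LinearMap.mulLeft A (x ^ (i : ℕ))) := by
    refine bas.ext fun j => ?_
    simp only [LinearMap.sum_apply, LinearMap.smul_apply, LinearMap.comp_apply,
      LinearMap.mulLeft_apply]
    rw [Finset.sum_eq_single j]
    · rw [hd, bas.dualBasis_apply_self j j, if_pos rfl, smul_eq_mul, mul_one,
        hbas j, ← pow_add]
      rfl
    · intro k _ hk
      rw [hd, bas.dualBasis_apply_self k j, if_neg (fun hh => hk hh.symm), smul_zero]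
    · intro hh; exact absurd (Finset.mem_univ j) hh
  calc (∑ k, M.transpose k i • d k) y = (δ0.comp (LinearMap.mulLeft A (x ^ (i : ℕ)))) y := by
        rw [this]
    _ = δ0 (x ^ (i : ℕ) * y) := rfl
end
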